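/- arXiv:2406.15056 — 2 statements merged into one kernel-verified Lean document; each statement's English description precedes it below -/
import Mathlib

section
/- Let H₁, H₂ : A → ℂ be square-integrable with ∫|H₂|² > 0 and let J₁, J₂ be arbitrary square-integrable currents. Define P₂ = |∫H₂J₂|²/(∫|H₂|²·(1+|∫H₂J₁|²)) and P₁ = |∫H₁J₁|²/(∫|H₁|² - P₂|∫H₁*H₂|²/(1+P₂∫|H₂|²)). Then P₁ + P₂ ≤ ∫|J₁|² + ∫|J₂|². -/
open MeasureTheory ComplexConjugate

private lemma real_two_cs (X Y A B μ : ℝ) (hμ : 0 < μ) :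
    (A * X + B * Y) ^ 2 ≤ (X ^ 2 + μ * Y ^ 2) * (A ^ 2 + B ^ 2 / μ) := by
  have key : (A * X + B * Y) ^ 2 * μ ≤ ((X ^ 2 + μ * Y ^ 2) * (A ^ 2 + B ^ 2 / μ)) * μ := by
    have h := sq_nonneg (X * B - μ * Y * A)
    field_simp
    nlinarith [sq_nonneg (X * B - μ * Y * A)]
  exact le_of_mul_le_mul_right key hμ

/-- Whitened Cauchy–Schwarz in a complex inner product space. -/
private lemma whitened_cs {E : Type*} [NormedAddCommGroup E] [InnerProductSpace ℂ E]
    (u w J : E) (μ : ℝ) (hμ : 0 ≤ μ) :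
    ‖(inner ℂ u J : ℂ)‖ ^ 2 ≤
      (‖J‖ ^ 2 + μ * ‖(inner ℂ w J : ℂ)‖ ^ 2) *
      (‖u‖ ^ 2 - μ * ‖(inner ℂ w u : ℂ)‖ ^ 2 / (1 + μ * ‖w‖ ^ 2)) := by
  rcases hμ.eq_or_lt with h0 | hμ'
  · subst h0
    simp only [zero_mul, add_zero, zero_div, sub_zero]
    have h := norm_inner_le_norm (𝕜 := ℂ) u J
    nlinarith [norm_nonneg (inner ℂ u J : ℂ), norm_nonneg u, norm_nonneg J]
  · set D : ℝ := 1 + μ * ‖w‖ ^ 2 with hD_def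
    have hD : 0 < D := by positivity
    set c : ℝ := ‖(inner ℂ w u : ℂ)‖ with hc_def
    set t : ℂ := (μ : ℂ) * (inner ℂ w u : ℂ) / (D : ℂ) with ht_def
    -- decomposition
    have hdec : (inner ℂ u J : ℂ) = (inner ℂ (u - t • w) J : ℂ) + conj t * (inner ℂ w J : ℂ) := by
      rw [inner_sub_left, inner_smul_left]; ring
    have h1 : ‖(inner ℂ u J : ℂ)‖ ≤ ‖u - t • w‖ * ‖J‖ + ‖t‖ * ‖(inner ℂ w J : ℂ)‖ := by
      rw [hdec]
      refine (norm_add_le _ _).trans ?_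
      gcongr
      · exact norm_inner_le_norm _ _
      · rw [norm_mul, RCLike.norm_conj]
    have ht_norm : ‖t‖ = μ * c / D := by
      rw [ht_def, norm_div, norm_mul, Complex.norm_real, Complex.norm_real,
        Real.norm_of_nonneg hμ, Real.norm_of_nonneg hD.le, hc_def]
    have ht_inner : (RCLike.re (inner ℂ u (t • w) : ℂ)) = μ * c ^ 2 / D := by
      have hz : (inner ℂ u w : ℂ) = conj (inner ℂ w u : ℂ) := by
        rw [← inner_conj_symm]
      have hcalc : (inner ℂ u (t • w) : ℂ) = ((μ * c ^ 2 / D : ℝ) : ℂ) := by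
        rw [inner_smul_right, ht_def, hz, div_mul_eq_mul_div, mul_assoc,
          RCLike.mul_conj]
        simp only [Complex.coe_algebraMap]
        push_cast [hc_def]
        ring
      rw [hcalc]
      simp [← Complex.ofReal_pow]
    have hA : ‖u - t • w‖ ^ 2 = ‖u‖ ^ 2 - 2 * (μ * c ^ 2 / D) + (μ * c / D) ^ 2 * ‖w‖ ^ 2 := by
      rw [@norm_sub_sq ℂ, ht_inner, norm_smul, mul_pow, ht_norm]
    have hsum : ‖u - t • w‖ ^ 2 + ‖t‖ ^ 2 / μ = ‖u‖ ^ 2 - μ * c ^ 2 / D := by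
      rw [hA, ht_norm, hD_def]
      field_simp
      ring
    have h2 : ‖(inner ℂ u J : ℂ)‖ ^ 2
        ≤ (‖u - t • w‖ * ‖J‖ + ‖t‖ * ‖(inner ℂ w J : ℂ)‖) ^ 2 := by
      have := norm_nonneg (inner ℂ u J : ℂ)
      nlinarith [h1]
    calc ‖(inner ℂ u J : ℂ)‖ ^ 2
        ≤ (‖u - t • w‖ * ‖J‖ + ‖t‖ * ‖(inner ℂ w J : ℂ)‖) ^ 2 := h2
      _ ≤ (‖J‖ ^ 2 + μ * ‖(inner ℂ w J : ℂ)‖ ^ 2) * (‖u - t • w‖ ^ 2 + ‖t‖ ^ 2 / μ) :=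
          real_two_cs _ _ _ _ μ hμ'
      _ = (‖J‖ ^ 2 + μ * ‖(inner ℂ w J : ℂ)‖ ^ 2) *
            (‖u‖ ^ 2 - μ * ‖(inner ℂ w u : ℂ)‖ ^ 2 / (1 + μ * ‖w‖ ^ 2)) := by
          rw [hsum]

private lemma inner_toLp_eq {α : Type*} [MeasureSpace α] {f g : α → ℂ}
    (hf : MemLp f 2) (hg : MemLp g 2) :
    (inner ℂ (hf.toLp f) (hg.toLp g) : ℂ) = ∫ r, conj (f r) * g r := by
  rw [MeasureTheory.L2.inner_def]
  refine integral_congr_ae ?_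
  filter_upwards [hf.coeFn_toLp, hg.coeFn_toLp] with a ha hb
  rw [ha, hb, RCLike.inner_apply, mul_comm]

private lemma norm_toLp_sq {α : Type*} [MeasureSpace α] {f : α → ℂ}
    (hf : MemLp f 2) :
    ‖hf.toLp f‖ ^ 2 = ∫ r, ‖f r‖ ^ 2 := by
  have h1 : (inner ℂ (hf.toLp f) (hf.toLp f) : ℂ) = ∫ r, conj (f r) * f r :=
    inner_toLp_eq hf hf
  have h2 : ∫ r, conj (f r) * f r = ((∫ r, ‖f r‖ ^ 2 : ℝ) : ℂ) := by
    calc ∫ r, conj (f r) * f r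
        = ∫ r, ((‖f r‖ ^ 2 : ℝ) : ℂ) := by
          refine integral_congr_ae (Filter.Eventually.of_forall fun r => ?_)
          show conj (f r) * f r = ((‖f r‖ ^ 2 : ℝ) : ℂ)
          rw [mul_comm, RCLike.mul_conj]
          simp only [Complex.coe_algebraMap]
          push_cast
          ring
      _ = ((∫ r, ‖f r‖ ^ 2 : ℝ) : ℂ) := integral_ofReal
  rw [← @inner_self_eq_norm_sq ℂ, h1, h2]
  simp

set_option maxHeartbeats 1600000 in
/-- Downlink-to-uplink transformation: the dual uplink powers `P₁, P₂` built
from arbitrary downlink currents `J₁, J₂` satisfy the same sum power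
constraint: `P₁ + P₂ ≤ ∫|J₁|² + ∫|J₂|²`. -/
theorem dual_uplink_power_constraint {α : Type*} [MeasureSpace α]
    (H₁ H₂ J₁ J₂ : α → ℂ)
    (hH₁ : MemLp H₁ 2) (hH₂ : MemLp H₂ 2) (hJ₁ : MemLp J₁ 2) (hJ₂ : MemLp J₂ 2)
    (hg₂ : 0 < ∫ r, ‖H₂ r‖ ^ 2)
    (P₁ P₂ : ℝ)
    (hP₂ : P₂ = ‖∫ r, H₂ r * J₂ r‖ ^ 2 /
      ((∫ r, ‖H₂ r‖ ^ 2) * (1 + ‖∫ r, H₂ r * J₁ r‖ ^ 2)))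
    (hden : 0 < (∫ r, ‖H₁ r‖ ^ 2) -
      P₂ * ‖∫ r, conj (H₁ r) * H₂ r‖ ^ 2 /
        (1 + P₂ * ∫ r, ‖H₂ r‖ ^ 2))
    (hP₁ : P₁ = ‖∫ r, H₁ r * J₁ r‖ ^ 2 /
      ((∫ r, ‖H₁ r‖ ^ 2) -
        P₂ * ‖∫ r, conj (H₁ r) * H₂ r‖ ^ 2 /
          (1 + P₂ * ∫ r, ‖H₂ r‖ ^ 2))) :
    P₁ + P₂ ≤ (∫ r, ‖J₁ r‖ ^ 2) + (∫ r, ‖J₂ r‖ ^ 2) := by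
  -- conjugated channels are in L²
  have hcH₁ : MemLp (fun x => conj (H₁ x)) 2 := by
    have h := (RCLike.conjCLE (K := ℂ)).toContinuousLinearMap.comp_memLp' hH₁
    exact h
  have hcH₂ : MemLp (fun x => conj (H₂ x)) 2 := by
    have h := (RCLike.conjCLE (K := ℂ)).toContinuousLinearMap.comp_memLp' hH₂
    exact h
  set U := hcH₁.toLp _ with hU
  set W := hcH₂.toLp _ with hW
  set K₁ := hJ₁.toLp J₁ with hK₁
  set K₂ := hJ₂.toLp J₂ with hK₂
  -- identify inner products with the integrals in the statement
  have hUK₁ : (inner ℂ U K₁ : ℂ) = ∫ r, H₁ r * J₁ r := by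
    rw [hU, hK₁, inner_toLp_eq]
    simp [Complex.conj_conj]
  have hWK₁ : (inner ℂ W K₁ : ℂ) = ∫ r, H₂ r * J₁ r := by
    rw [hW, hK₁, inner_toLp_eq]
    simp [Complex.conj_conj]
  have hWK₂ : (inner ℂ W K₂ : ℂ) = ∫ r, H₂ r * J₂ r := by
    rw [hW, hK₂, inner_toLp_eq]
    simp [Complex.conj_conj]
  have hWU : (inner ℂ W U : ℂ) = ∫ r, conj (H₁ r) * H₂ r := by
    rw [hW, hU, inner_toLp_eq]
    simp only [Complex.conj_conj]
    exact integral_congr_ae (Filter.Eventually.of_forall fun r => mul_comm _ _)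
  have hnU : ‖U‖ ^ 2 = ∫ r, ‖H₁ r‖ ^ 2 := by
    rw [hU, norm_toLp_sq]; simp
  have hnW : ‖W‖ ^ 2 = ∫ r, ‖H₂ r‖ ^ 2 := by
    rw [hW, norm_toLp_sq]; simp
  have hnK₁ : ‖K₁‖ ^ 2 = ∫ r, ‖J₁ r‖ ^ 2 := norm_toLp_sq hJ₁
  have hnK₂ : ‖K₂‖ ^ 2 = ∫ r, ‖J₂ r‖ ^ 2 := norm_toLp_sq hJ₂
  -- abbreviations
  set g₁ : ℝ := ∫ r, ‖H₁ r‖ ^ 2 with hg₁def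
  set g₂ : ℝ := ∫ r, ‖H₂ r‖ ^ 2 with hg₂def
  set e₁ : ℝ := ∫ r, ‖J₁ r‖ ^ 2 with he₁def
  set e₂ : ℝ := ∫ r, ‖J₂ r‖ ^ 2 with he₂def
  set s : ℝ := ‖∫ r, H₁ r * J₁ r‖ ^ 2 with hsdef
  set a : ℝ := ‖∫ r, H₂ r * J₁ r‖ ^ 2 with hadef
  set b : ℝ := ‖∫ r, H₂ r * J₂ r‖ ^ 2 with hbdef
  set c : ℝ := ‖∫ r, conj (H₁ r) * H₂ r‖ ^ 2 with hcdef
  have ha0 : 0 ≤ a := by rw [hadef]; exact pow_nonneg (norm_nonneg _) 2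
  have hb0 : 0 ≤ b := by rw [hbdef]; exact pow_nonneg (norm_nonneg _) 2
  have hP₂0 : 0 ≤ P₂ := by
    rw [hP₂]
    exact div_nonneg hb0 (mul_nonneg hg₂.le (by linarith))
  -- Cauchy-Schwarz for J₂ : b ≤ g₂ * e₂
  have hCS2 : b ≤ g₂ * e₂ := by
    have h := norm_inner_le_norm (𝕜 := ℂ) W K₂
    have h2 : ‖(inner ℂ W K₂ : ℂ)‖ ^ 2 ≤ ‖W‖ ^ 2 * ‖K₂‖ ^ 2 := by
      nlinarith [norm_nonneg (inner ℂ W K₂ : ℂ), norm_nonneg W, norm_nonneg K₂]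
    rw [hWK₂, hnW, hnK₂] at h2
    exact h2
  -- whitened Cauchy-Schwarz for J₁ with μ = P₂
  have hCS1 : s ≤ (e₁ + P₂ * a) * (g₁ - P₂ * c / (1 + P₂ * g₂)) := by
    have h := whitened_cs U W K₁ P₂ hP₂0
    rw [hUK₁, hWK₁, hWU, hnU, hnW, hnK₁] at h
    exact h
  -- P₁ ≤ e₁ + P₂ * a
  have hP₁le : P₁ ≤ e₁ + P₂ * a := by
    rw [hP₁]
    rw [div_le_iff₀ hden]
    exact hCS1
  -- P₂ * (1 + a) = b / g₂
  have hP₂eq : P₂ * (1 + a) = b / g₂ := by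
    rw [hP₂]
    have h1a : (0:ℝ) < 1 + a := by linarith
    field_simp
  have hb_div : b / g₂ ≤ e₂ := by
    rw [div_le_iff₀ hg₂]
    calc b ≤ g₂ * e₂ := hCS2
      _ = e₂ * g₂ := mul_comm _ _
  have hfinal : P₂ * (1 + a) ≤ e₂ := hP₂eq ▸ hb_div
  nlinarith [mul_nonneg hP₂0 ha0]
end

section
/- Let A = [-Lx/2, Lx/2] × [-Lz/2, Lz/2] ⊆ ℝ², let r > 0, and let Φ, Ψ, Θ be direction cosines with Ψ > 0 and Φ²+Ψ²+Θ² = 1. Then (rΨ/(4π)) ∫∫_A (x² + z² - 2r(Φx + Θz) + r²)^{-3/2} dx dz = (1/(4π)) Σ_{x∈X} Σ_{z∈Z} arctan( (xz/Ψ) / √(Ψ² + x² + z²) ), where X = {Lx/(2r) + Φ, Lx/(2r) - Φ} and Z = {Lz/(2r) + Θ, Lz/(2r) - Θ}. -/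
open Real

lemma inner_int (c : ℝ) (hc : 0 < c) (t1 t2 : ℝ) :
    ∫ t in t1..t2, (t ^ 2 + c ^ 2) ^ (-(3:ℝ)/2) =
      t2 / (c ^ 2 * Real.sqrt (t2 ^ 2 + c ^ 2)) - t1 / (c ^ 2 * Real.sqrt (t1 ^ 2 + c ^ 2)) := by
  have hS : ∀ t : ℝ, 0 < t ^ 2 + c ^ 2 := fun t => by positivity
  have hderiv : ∀ t : ℝ, HasDerivAt (fun t => t / (c ^ 2 * Real.sqrt (t ^ 2 + c ^ 2)))
      ((t ^ 2 + c ^ 2) ^ (-(3:ℝ)/2)) t := by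
    intro t
    have h1 : HasDerivAt (fun t : ℝ => t ^ 2 + c ^ 2) (2 * t) t := by
      simpa using (hasDerivAt_pow 2 t).add_const (c ^ 2)
    have h2 : HasDerivAt (fun t : ℝ => Real.sqrt (t ^ 2 + c ^ 2))
        (2 * t / (2 * Real.sqrt (t ^ 2 + c ^ 2))) t := h1.sqrt (ne_of_gt (hS t))
    have h3 : HasDerivAt (fun t : ℝ => c ^ 2 * Real.sqrt (t ^ 2 + c ^ 2))
        (c ^ 2 * (2 * t / (2 * Real.sqrt (t ^ 2 + c ^ 2)))) t := h2.const_mul _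
    have hs : 0 < Real.sqrt (t ^ 2 + c ^ 2) := Real.sqrt_pos.mpr (hS t)
    have h4 := (hasDerivAt_id t).div h3 (by positivity)
    refine h4.congr_deriv ?_
    symm
    simp only [id]
    have hsq : Real.sqrt (t ^ 2 + c ^ 2) ^ 2 = t ^ 2 + c ^ 2 := Real.sq_sqrt (hS t).le
    have hrw : (t ^ 2 + c ^ 2) ^ (-(3:ℝ)/2) = 1 / (Real.sqrt (t ^ 2 + c ^ 2) * (t ^ 2 + c ^ 2)) := by
      rw [show (-(3:ℝ)/2) = -(1 + 1/2) by norm_num, Real.rpow_neg (hS t).le,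
        Real.rpow_add (hS t), Real.rpow_one, ← Real.sqrt_eq_rpow]
      rw [one_div, mul_comm]
    rw [hrw]
    set s := Real.sqrt (t ^ 2 + c ^ 2) with hsdef
    field_simp
    rw [← hsq]
    linear_combination (-s^2) * hsq
  have hcont : Continuous fun t : ℝ => (t ^ 2 + c ^ 2) ^ (-(3:ℝ)/2) :=
    Continuous.rpow_const (by fun_prop) (fun t => Or.inl (by positivity))
  exact intervalIntegral.integral_eq_sub_of_hasDerivAt (fun t _ => hderiv t)
    (hcont.intervalIntegrable _ _)

lemma outer_deriv (a u : ℝ) (ha : 0 < a) (w : ℝ) :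
    HasDerivAt (fun w => (1/a) * Real.arctan (u * w / (a * Real.sqrt (u ^ 2 + w ^ 2 + a ^ 2))))
      (u / ((w ^ 2 + a ^ 2) * Real.sqrt (u ^ 2 + w ^ 2 + a ^ 2))) w := by
  have hS : ∀ w : ℝ, 0 < u ^ 2 + w ^ 2 + a ^ 2 := fun w => by positivity
  have hs : 0 < Real.sqrt (u ^ 2 + w ^ 2 + a ^ 2) := Real.sqrt_pos.mpr (hS w)
  have h1 : HasDerivAt (fun w : ℝ => u ^ 2 + w ^ 2 + a ^ 2) (2 * w) w := by
    have := ((hasDerivAt_pow 2 w).const_add (u ^ 2)).add_const (a ^ 2)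
    simpa [add_assoc] using this
  have h2 : HasDerivAt (fun w : ℝ => Real.sqrt (u ^ 2 + w ^ 2 + a ^ 2))
      (2 * w / (2 * Real.sqrt (u ^ 2 + w ^ 2 + a ^ 2))) w := h1.sqrt (ne_of_gt (hS w))
  have h3 : HasDerivAt (fun w : ℝ => a * Real.sqrt (u ^ 2 + w ^ 2 + a ^ 2))
      (a * (2 * w / (2 * Real.sqrt (u ^ 2 + w ^ 2 + a ^ 2)))) w := h2.const_mul _
  have h4 : HasDerivAt (fun w : ℝ => u * w) u w := by
    simpa using (hasDerivAt_id w).const_mul u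
  have h5 := h4.div h3 (by positivity)
  have h6 := (h5.arctan).const_mul (1/a)
  refine h6.congr_deriv ?_
  symm
  simp only [Pi.div_apply]
  set s := Real.sqrt (u ^ 2 + w ^ 2 + a ^ 2) with hsdef
  have hsq : s ^ 2 = u ^ 2 + w ^ 2 + a ^ 2 := Real.sq_sqrt (hS w).le
  have hd : 0 < w ^ 2 + a ^ 2 := by positivity
  rw [div_pow]
  field_simp
  linear_combination (-u*w^2) * hsq

lemma cont_G (a u : ℝ) (ha : 0 < a) :
    Continuous fun w : ℝ => u / ((w ^ 2 + a ^ 2) * Real.sqrt (u ^ 2 + w ^ 2 + a ^ 2)) := by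
  apply Continuous.div continuous_const (by fun_prop)
  intro w
  have h1 : 0 < w ^ 2 + a ^ 2 := by positivity
  have h2 : 0 < Real.sqrt (u ^ 2 + w ^ 2 + a ^ 2) := Real.sqrt_pos.mpr (by positivity)
  positivity

lemma outer_int (a u : ℝ) (ha : 0 < a) (w1 w2 : ℝ) :
    ∫ w in w1..w2, u / ((w ^ 2 + a ^ 2) * Real.sqrt (u ^ 2 + w ^ 2 + a ^ 2)) =
      (1/a) * Real.arctan (u * w2 / (a * Real.sqrt (u ^ 2 + w2 ^ 2 + a ^ 2))) -
      (1/a) * Real.arctan (u * w1 / (a * Real.sqrt (u ^ 2 + w1 ^ 2 + a ^ 2))) :=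
  intervalIntegral.integral_eq_sub_of_hasDerivAt (fun w _ => outer_deriv a u ha w)
    ((cont_G a u ha).intervalIntegrable _ _)

lemma term_eq (r Ψ : ℝ) (hr : 0 < r) (hΨ : 0 < Ψ) (u w X Z : ℝ)
    (hu : u = r * X) (hw : w = r * Z) :
    Real.arctan (u * w / ((r * Ψ) * Real.sqrt (u ^ 2 + w ^ 2 + (r * Ψ) ^ 2))) =
    Real.arctan (X * Z / Ψ / Real.sqrt (Ψ ^ 2 + X ^ 2 + Z ^ 2)) := by
  subst hu hw
  have h0 : 0 < Ψ ^ 2 + X ^ 2 + Z ^ 2 := by positivity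
  have hs : 0 < Real.sqrt (Ψ ^ 2 + X ^ 2 + Z ^ 2) := Real.sqrt_pos.mpr h0
  congr 1
  rw [show (r*X) ^ 2 + (r*Z) ^ 2 + (r*Ψ) ^ 2 = r ^ 2 * (Ψ ^ 2 + X ^ 2 + Z ^ 2) by ring,
    Real.sqrt_mul (sq_nonneg r), Real.sqrt_sq hr.le]
  field_simp

/-- Closed-form channel gain of a planar CAPA: the double integral of the
squared LoS channel magnitude over the rectangular aperture equals a sum of
four arctangent terms. -/
theorem planar_capa_channel_gain (Lx Lz r Φ Ψ Θ : ℝ)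
    (hLx : 0 < Lx) (hLz : 0 < Lz) (hr : 0 < r) (hΨ : 0 < Ψ)
    (hdir : Φ ^ 2 + Ψ ^ 2 + Θ ^ 2 = 1) :
    (r * Ψ / (4 * π)) *
      ∫ z in (-Lz / 2)..(Lz / 2), ∫ x in (-Lx / 2)..(Lx / 2),
        (x ^ 2 + z ^ 2 - 2 * r * (Φ * x + Θ * z) + r ^ 2) ^ (-(3 : ℝ) / 2) =
    (1 / (4 * π)) *
      ((arctan ((Lx / (2 * r) + Φ) * (Lz / (2 * r) + Θ) / Ψ /
          Real.sqrt (Ψ ^ 2 + (Lx / (2 * r) + Φ) ^ 2 + (Lz / (2 * r) + Θ) ^ 2))) +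
       (arctan ((Lx / (2 * r) + Φ) * (Lz / (2 * r) - Θ) / Ψ /
          Real.sqrt (Ψ ^ 2 + (Lx / (2 * r) + Φ) ^ 2 + (Lz / (2 * r) - Θ) ^ 2))) +
       (arctan ((Lx / (2 * r) - Φ) * (Lz / (2 * r) + Θ) / Ψ /
          Real.sqrt (Ψ ^ 2 + (Lx / (2 * r) - Φ) ^ 2 + (Lz / (2 * r) + Θ) ^ 2))) +
       (arctan ((Lx / (2 * r) - Φ) * (Lz / (2 * r) - Θ) / Ψ /
          Real.sqrt (Ψ ^ 2 + (Lx / (2 * r) - Φ) ^ 2 + (Lz / (2 * r) - Θ) ^ 2)))) := by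
  have ha : 0 < r * Ψ := mul_pos hr hΨ
  set a : ℝ := r * Ψ with hadef
  set u2 : ℝ := Lx / 2 - r * Φ with hu2
  set u1 : ℝ := -(Lx / 2) - r * Φ with hu1
  -- Step 1: inner integral
  have hinner : ∀ z : ℝ,
      (∫ x in (-Lx / 2)..(Lx / 2),
        (x ^ 2 + z ^ 2 - 2 * r * (Φ * x + Θ * z) + r ^ 2) ^ (-(3 : ℝ) / 2)) =
      u2 / (((z - r * Θ) ^ 2 + a ^ 2) * Real.sqrt (u2 ^ 2 + (z - r * Θ) ^ 2 + a ^ 2)) -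
      u1 / (((z - r * Θ) ^ 2 + a ^ 2) * Real.sqrt (u1 ^ 2 + (z - r * Θ) ^ 2 + a ^ 2)) := by
    intro z
    have hX : 0 < (z - r * Θ) ^ 2 + a ^ 2 := by positivity
    have hc : 0 < Real.sqrt ((z - r * Θ) ^ 2 + a ^ 2) := Real.sqrt_pos.mpr hX
    have key := inner_int _ hc u1 u2
    rw [Real.sq_sqrt hX.le] at key
    calc (∫ x in (-Lx / 2)..(Lx / 2),
          (x ^ 2 + z ^ 2 - 2 * r * (Φ * x + Θ * z) + r ^ 2) ^ (-(3 : ℝ) / 2))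
        = ∫ x in (-Lx / 2)..(Lx / 2),
            ((x - r * Φ) ^ 2 + (Real.sqrt ((z - r * Θ) ^ 2 + a ^ 2)) ^ 2) ^ (-(3 : ℝ) / 2) := by
          apply intervalIntegral.integral_congr
          intro x _
          have hb : x ^ 2 + z ^ 2 - 2 * r * (Φ * x + Θ * z) + r ^ 2 =
              (x - r * Φ) ^ 2 + (Real.sqrt ((z - r * Θ) ^ 2 + a ^ 2)) ^ 2 := by
            rw [Real.sq_sqrt hX.le]
            linear_combination (-(r ^ 2)) * hdir - (a + r * Ψ) * hadef
          simp only [hb]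
      _ = ∫ t in (-Lx / 2 - r * Φ)..(Lx / 2 - r * Φ),
            (t ^ 2 + (Real.sqrt ((z - r * Θ) ^ 2 + a ^ 2)) ^ 2) ^ (-(3 : ℝ) / 2) := by
          have := intervalIntegral.integral_comp_sub_right
            (a := -Lx / 2) (b := Lx / 2)
            (fun t => (t ^ 2 + (Real.sqrt ((z - r * Θ) ^ 2 + a ^ 2)) ^ 2) ^ (-(3 : ℝ) / 2)) (r * Φ)
          simpa using this
      _ = _ := by
          rw [show (-Lx / 2 - r * Φ) = u1 by rw [hu1]; ring,
              show (Lx / 2 - r * Φ) = u2 by rw [hu2]]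
          simp only [Real.sq_sqrt hX.le]
          rw [key]
          rw [show u2 ^ 2 + ((z - r * Θ) ^ 2 + a ^ 2) = u2 ^ 2 + (z - r * Θ) ^ 2 + a ^ 2 by ring,
              show u1 ^ 2 + ((z - r * Θ) ^ 2 + a ^ 2) = u1 ^ 2 + (z - r * Θ) ^ 2 + a ^ 2 by ring]
  -- Step 2: rewrite outer integrand and shift
  have houter : (∫ z in (-Lz / 2)..(Lz / 2), ∫ x in (-Lx / 2)..(Lx / 2),
        (x ^ 2 + z ^ 2 - 2 * r * (Φ * x + Θ * z) + r ^ 2) ^ (-(3 : ℝ) / 2)) =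
      ∫ w in (-Lz / 2 - r * Θ)..(Lz / 2 - r * Θ),
        (u2 / ((w ^ 2 + a ^ 2) * Real.sqrt (u2 ^ 2 + w ^ 2 + a ^ 2)) -
         u1 / ((w ^ 2 + a ^ 2) * Real.sqrt (u1 ^ 2 + w ^ 2 + a ^ 2))) := by
    rw [intervalIntegral.integral_congr (g := fun z =>
      u2 / (((z - r * Θ) ^ 2 + a ^ 2) * Real.sqrt (u2 ^ 2 + (z - r * Θ) ^ 2 + a ^ 2)) -
      u1 / (((z - r * Θ) ^ 2 + a ^ 2) * Real.sqrt (u1 ^ 2 + (z - r * Θ) ^ 2 + a ^ 2)))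
      (fun z _ => hinner z)]
    have := intervalIntegral.integral_comp_sub_right
      (a := -Lz / 2) (b := Lz / 2)
      (fun w => u2 / ((w ^ 2 + a ^ 2) * Real.sqrt (u2 ^ 2 + w ^ 2 + a ^ 2)) -
                u1 / ((w ^ 2 + a ^ 2) * Real.sqrt (u1 ^ 2 + w ^ 2 + a ^ 2))) (r * Θ)
    simpa using this
  rw [houter]
  set w2 : ℝ := Lz / 2 - r * Θ with hw2
  set w1 : ℝ := -Lz / 2 - r * Θ with hw1
  rw [intervalIntegral.integral_sub
      (((cont_G a u2 ha).intervalIntegrable _ _))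
      (((cont_G a u1 ha).intervalIntegrable _ _)),
    outer_int a u2 ha w1 w2, outer_int a u1 ha w1 w2]
  -- Step 3: arctan algebra
  have e22 := term_eq r Ψ hr hΨ u2 w2 (Lx / (2 * r) - Φ) (Lz / (2 * r) - Θ)
    (by rw [hu2]; field_simp) (by rw [hw2]; field_simp)
  have e21 := term_eq r Ψ hr hΨ u2 w1 (Lx / (2 * r) - Φ) (-(Lz / (2 * r) + Θ))
    (by rw [hu2]; field_simp) (by rw [hw1]; field_simp; ring)
  have e12 := term_eq r Ψ hr hΨ u1 w2 (-(Lx / (2 * r) + Φ)) (Lz / (2 * r) - Θ)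
    (by rw [hu1]; field_simp; ring) (by rw [hw2]; field_simp)
  have e11 := term_eq r Ψ hr hΨ u1 w1 (-(Lx / (2 * r) + Φ)) (-(Lz / (2 * r) + Θ))
    (by rw [hu1]; field_simp; ring) (by rw [hw1]; field_simp; ring)
  rw [e22, e21, e12, e11]
  simp only [neg_sq, neg_mul, mul_neg, neg_neg, neg_div, Real.arctan_neg]
  have hπ : (π : ℝ) ≠ 0 := Real.pi_ne_zero
  field_simp
  ring
end
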